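/- arXiv:2510.05463 — 3 statements merged into one kernel-verified Lean document; each statement's English description precedes it below -/
import Mathlib

section
/- Let E_1 ∈ ℱ_1 and let E_2 ⊆ [0,1]×Ω be measurable and non-anticipative. Then 𝒬^E is empty if and only if 𝒬̄^E is empty. -/
open MeasureTheory Set Filter Topology
open scoped ENNReal

noncomputable section

/-- `ℝ^d`. -/
abbrev Eucl (d : ℕ) : Type := EuclideanSpace ℝ (Fin d)

/-- A function indexed by a linearly ordered topological space is càdlàg if it is
right-continuous at every point and has left limits at every point. -/
def Cadlag {α : Type*} [TopologicalSpace α] [LinearOrder α] {β : Type*} [TopologicalSpace β]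
    (f : α → β) : Prop :=
  (∀ t : α, Tendsto f (𝓝[>] t) (𝓝 (f t))) ∧ (∀ t : α, ∃ L : β, Tendsto f (𝓝[<] t) (𝓝 L))

/-- The canonical path space `Ω`: càdlàg paths `ω : [0,1] → ℝ^d`. -/
def PathSpace (d : ℕ) : Type := {ω : unitInterval → Eucl d // Cadlag ω}

/-- The canonical filtration `ℱ_t := σ(X_s : s ≤ t)` on the path space. -/
def pathF (d : ℕ) (t : unitInterval) : MeasurableSpace (PathSpace d) :=
  ⨆ s : unitInterval, ⨆ _ : s ≤ t, MeasurableSpace.comap (fun ω : PathSpace d => ω.1 s) inferInstance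

/-- The σ-algebra `ℱ_1` on `Ω`. -/
instance instMSPathSpace (d : ℕ) : MeasurableSpace (PathSpace d) := pathF d 1

/-- Lebesgue measure `λ` on `[0,1]`. -/
def lebI : Measure unitInterval := (volume : Measure ℝ).comap Subtype.val

/-- `X` is a square-integrable martingale under `P` (w.r.t. the canonical filtration):
`E^P‖X_t‖² < ∞` for all `t` and `E^P[X_t | ℱ_s] = X_s` `P`-a.s. for all `s ≤ t`. -/
def IsSqIntMart (d : ℕ) (P : Measure (PathSpace d)) : Prop :=
  (∀ t : unitInterval, Integrable (fun ω : PathSpace d => ‖ω.1 t‖ ^ 2) P) ∧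
  (∀ s t : unitInterval, s ≤ t →
    (fun ω : PathSpace d => ω.1 s) =ᵐ[P] P[fun ω : PathSpace d => ω.1 t | pathF d s])

/-- `𝒬`: probability measures on `(Ω, ℱ_1)` under which `X` is a square-integrable martingale. -/
def QSet (d : ℕ) : Set (Measure (PathSpace d)) :=
  {P | IsProbabilityMeasure P ∧ IsSqIntMart d P}

lemma cadlag_stop {d : ℕ} (ω : PathSpace d) (t : unitInterval) :
    Cadlag (fun s => ω.1 (min s t)) := by
  constructor
  · intro s
    rcases le_or_gt t s with h | h
    · have hev : ∀ᶠ s' in 𝓝[>] s, ω.1 (min s' t) = ω.1 (min s t) := by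
        filter_upwards [self_mem_nhdsWithin] with s' hs'
        have h1 : min s' t = t := min_eq_right (le_of_lt (lt_of_le_of_lt h hs'))
        have h2 : min s t = t := min_eq_right h
        rw [h1, h2]
      exact Tendsto.congr' (by filter_upwards [hev] with a ha using ha.symm) tendsto_const_nhds
    · have hmem : Iio t ∈ 𝓝[>] s := nhdsWithin_le_nhds (Iio_mem_nhds h)
      have hev : ∀ᶠ s' in 𝓝[>] s, ω.1 s' = ω.1 (min s' t) := by
        filter_upwards [hmem] with s' hs'
        rw [min_eq_left (le_of_lt hs')]
      have hmin : min s t = s := min_eq_left h.le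
      refine Tendsto.congr' hev ?_
      show Tendsto (fun s' => ω.1 s') (𝓝[>] s) (𝓝 (ω.1 (min s t)))
      rw [hmin]
      exact ω.2.1 s
  · intro s
    rcases le_or_gt s t with h | h
    · obtain ⟨L, hL⟩ := ω.2.2 s
      refine ⟨L, ?_⟩
      have hev : ∀ᶠ s' in 𝓝[<] s, ω.1 s' = ω.1 (min s' t) := by
        filter_upwards [self_mem_nhdsWithin] with s' hs'
        rw [min_eq_left (le_of_lt (lt_of_lt_of_le hs' h))]
      exact Tendsto.congr' hev hL
    · refine ⟨ω.1 t, ?_⟩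
      have hmem : Ioi t ∈ 𝓝[<] s := nhdsWithin_le_nhds (Ioi_mem_nhds h)
      have hev : ∀ᶠ s' in 𝓝[<] s, ω.1 (min s' t) = ω.1 t := by
        filter_upwards [hmem] with s' hs'
        rw [min_eq_right (le_of_lt hs')]
      exact Tendsto.congr' (by filter_upwards [hev] with a ha using ha.symm) tendsto_const_nhds

/-- The stopped path `ω_{·∧t}`. -/
def stopPath {d : ℕ} (ω : PathSpace d) (t : unitInterval) : PathSpace d :=
  ⟨fun s => ω.1 (min s t), cadlag_stop ω t⟩

/-- A set `E₂ ⊆ [0,1] × Ω` is non-anticipative if `(t,ω) ∈ E₂ ⇔ (t, ω_{·∧t}) ∈ E₂`. -/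
def NonAnticipativeSet {d : ℕ} (E₂ : Set (unitInterval × PathSpace d)) : Prop :=
  ∀ p : unitInterval × PathSpace d, p ∈ E₂ ↔ (p.1, stopPath p.2 p.1) ∈ E₂

/-- A function `Z` on `[0,1] × Ω` is non-anticipative if `Z(t,ω) = Z(t, ω_{·∧t})`. -/
def NonAnticipativeFun {d : ℕ} (Z : unitInterval × PathSpace d → ℝ) : Prop :=
  ∀ p : unitInterval × PathSpace d, Z p = Z (p.1, stopPath p.2 p.1)

/-- The enlarged space `Ω̄ := [0,1] × Ω`. -/
abbrev OmegaBar (d : ℕ) : Type := unitInterval × PathSpace d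

/-- The enlarged filtration `ℱ̄_t := σ((θ,ω) ↦ θ∧t) ∨ σ((θ,ω) ↦ ω(s) : s ≤ t)`. -/
def barF (d : ℕ) (t : unitInterval) : MeasurableSpace (OmegaBar d) :=
  MeasurableSpace.comap (fun p : OmegaBar d => min p.1 t) inferInstance ⊔
  ⨆ s : unitInterval, ⨆ _ : s ≤ t,
    MeasurableSpace.comap (fun p : OmegaBar d => p.2.1 s) inferInstance

/-- `(θ,ω) ↦ X_t(ω)` is a square-integrable martingale w.r.t. `(ℱ̄_t)` under `μ`. -/
def IsSqIntMartBar (d : ℕ) (μ : Measure (OmegaBar d)) : Prop :=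
  (∀ t : unitInterval, Integrable (fun p : OmegaBar d => ‖p.2.1 t‖ ^ 2) μ) ∧
  (∀ s t : unitInterval, s ≤ t →
    (fun p : OmegaBar d => p.2.1 s) =ᵐ[μ] μ[fun p : OmegaBar d => p.2.1 t | barF d s])

/-- `𝒬̄`: probability measures on `Ω̄` under which `X` is a square-integrable `ℱ̄`-martingale. -/
def QBar (d : ℕ) : Set (Measure (OmegaBar d)) :=
  {μ | IsProbabilityMeasure μ ∧ IsSqIntMartBar d μ}

/-- `𝒬^E`. -/
def QE (d : ℕ) (E₁ : Set (PathSpace d)) (E₂ : Set (unitInterval × PathSpace d)) :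
    Set (Measure (PathSpace d)) :=
  {P | P ∈ QSet d ∧ P E₁ = 1 ∧ (lebI.prod P) E₂ = 1}

/-- `𝒬̄^E`. -/
def QEBar (d : ℕ) (E₁ : Set (PathSpace d)) (E₂ : Set (unitInterval × PathSpace d)) :
    Set (Measure (OmegaBar d)) :=
  {μ | μ ∈ QBar d ∧ μ (univ ×ˢ E₁) = 1 ∧
    (lebI.prod μ) {q : unitInterval × OmegaBar d | (q.1, q.2.2) ∈ E₂} = 1}

/-- The augmented filtration `ℱ^P_t := ℱ_t ∨ σ(P-null sets of ℱ_1)`. -/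
def augF (d : ℕ) (P : Measure (PathSpace d)) (t : unitInterval) :
    MeasurableSpace (PathSpace d) :=
  pathF d t ⊔ MeasurableSpace.generateFrom {N : Set (PathSpace d) | P N = 0}

/-- `τ` is a `[0,1]`-valued `𝔽^P`-stopping time. -/
def IsStopTime (d : ℕ) (P : Measure (PathSpace d)) (τ : PathSpace d → unitInterval) : Prop :=
  ∀ t : unitInterval, MeasurableSet[augF d P t] {ω : PathSpace d | τ ω ≤ t}

/-- `Z : [0,1] × Ω → ℝ` is `𝔽`-progressively measurable: for each `t ∈ [0,1]` the restriction
of `Z` to `[0,t] × Ω` is `Borel([0,t]) ⊗ ℱ_t`-measurable. -/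
def ProgMeas {d : ℕ} (Z : unitInterval × PathSpace d → ℝ) : Prop :=
  ∀ t : unitInterval,
    @Measurable ({s : unitInterval // s ≤ t} × PathSpace d) ℝ
      (@Prod.instMeasurableSpace _ _ inferInstance (pathF d t)) _
      (fun q => Z (q.1.1, q.2))

/-- `ψ : [0,1] × Ω → ℝ` is `𝔽^P`-progressively measurable. -/
def ProgMeasAug {d : ℕ} (P : Measure (PathSpace d)) (ψ : unitInterval × PathSpace d → ℝ) : Prop :=
  ∀ t : unitInterval,
    @Measurable ({s : unitInterval // s ≤ t} × PathSpace d) ℝ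
      (@Prod.instMeasurableSpace _ _ inferInstance (augF d P t)) _
      (fun q => ψ (q.1.1, q.2))

/-- The integral of `f` against `P` with values in `EReal` (allowed to be `±∞`). -/
def intE {α : Type*} [MeasurableSpace α] (P : Measure α) (f : α → ℝ) : EReal :=
  ((∫⁻ a, ENNReal.ofReal (f a) ∂P : ℝ≥0∞) : EReal) -
    ((∫⁻ a, ENNReal.ofReal (-(f a)) ∂P : ℝ≥0∞) : EReal)

/-- `μ` is `ε`-modified: `μ({1}×Γ) ≥ ε·μ^Ω(Γ)` for all `Γ ∈ ℱ_1`. -/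
def EpsModified {d : ℕ} (ε : ℝ) (μ : Measure (OmegaBar d)) : Prop :=
  ∀ Γ : Set (PathSpace d), MeasurableSet[pathF d 1] Γ →
    ENNReal.ofReal ε * (μ.map Prod.snd) Γ ≤ μ ({(1 : unitInterval)} ×ˢ Γ)


namespace QEAux

variable {d : ℕ}

lemma evalMeas {u s : unitInterval} (h : u ≤ s) :
    Measurable[pathF d s] (fun ω : PathSpace d => ω.1 u) :=
  Measurable.of_comap_le (le_iSup₂ (f := fun (u : unitInterval) (_ : u ≤ s) =>
    MeasurableSpace.comap (fun ω : PathSpace d => ω.1 u) inferInstance) u h)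

lemma pathF_mono {s t : unitInterval} (h : s ≤ t) : pathF d s ≤ pathF d t :=
  iSup_le fun u => iSup_le fun hu =>
    le_iSup₂ (f := fun (u : unitInterval) (_ : u ≤ t) =>
      MeasurableSpace.comap (fun ω : PathSpace d => ω.1 u) inferInstance) u (hu.trans h)

lemma pathF_le (s : unitInterval) : pathF d s ≤ instMSPathSpace d :=
  pathF_mono unitInterval.le_one'

lemma measurable_evalBar (t : unitInterval) :
    Measurable (fun p : OmegaBar d => p.2.1 t) :=
  (evalMeas (d := d) unitInterval.le_one').comp measurable_snd

lemma barF_le (s : unitInterval) :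
    barF d s ≤ (inferInstance : MeasurableSpace (OmegaBar d)) := by
  refine sup_le ?_ (iSup_le fun u => iSup_le fun hu => ?_)
  · exact Measurable.comap_le (measurable_fst.min measurable_const)
  · exact Measurable.comap_le (measurable_evalBar u)

lemma comap_snd_le_barF (s : unitInterval) :
    MeasurableSpace.comap (Prod.snd : OmegaBar d → PathSpace d) (pathF d s) ≤ barF d s := by
  rw [pathF, MeasurableSpace.comap_iSup]
  refine iSup_le fun u => ?_
  rw [MeasurableSpace.comap_iSup]
  refine iSup_le fun hu => ?_
  rw [MeasurableSpace.comap_comp]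
  exact le_sup_of_le_right (le_iSup₂ (f := fun (u : unitInterval) (_ : u ≤ s) =>
    MeasurableSpace.comap (fun p : OmegaBar d => p.2.1 u) inferInstance) u hu)

lemma measurable_mk_one (s : unitInterval) :
    @Measurable (PathSpace d) (OmegaBar d) (pathF d s) (barF d s)
      (fun ω => ((1 : unitInterval), ω)) := by
  rw [measurable_iff_comap_le, barF, MeasurableSpace.comap_sup, MeasurableSpace.comap_comp]
  refine sup_le ?_ ?_
  · have h : ((fun p : OmegaBar d => min p.1 s) ∘ fun ω : PathSpace d => ((1 : unitInterval), ω))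
        = fun _ => min 1 s := rfl
    rw [h, MeasurableSpace.comap_const]
    exact bot_le
  · rw [MeasurableSpace.comap_iSup]
    refine iSup_le fun u => ?_
    rw [MeasurableSpace.comap_iSup]
    refine iSup_le fun hu => ?_
    rw [MeasurableSpace.comap_comp]
    exact (evalMeas hu).comap_le

lemma integrable_of_sq {α : Type*} [MeasurableSpace α] {μ : Measure α} [IsFiniteMeasure μ]
    {f : α → Eucl d} (hm : AEStronglyMeasurable f μ)
    (h2 : Integrable (fun a => ‖f a‖ ^ 2) μ) : Integrable f μ := by
  refine ((integrable_const (1 : ℝ)).add h2).mono' hm (Eventually.of_forall fun a => ?_)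
  simp only [Pi.add_apply]
  nlinarith [sq_nonneg (‖f a‖ - 1), norm_nonneg (f a)]

lemma integrable_evalP {P : Measure (PathSpace d)} [IsFiniteMeasure P]
    (h : ∀ t : unitInterval, Integrable (fun ω : PathSpace d => ‖ω.1 t‖ ^ 2) P)
    (t : unitInterval) : Integrable (fun ω : PathSpace d => ω.1 t) P :=
  integrable_of_sq (evalMeas (d := d) unitInterval.le_one').aestronglyMeasurable (h t)

lemma integrable_evalBar {μ : Measure (OmegaBar d)} [IsFiniteMeasure μ]
    (h : ∀ t : unitInterval, Integrable (fun p : OmegaBar d => ‖p.2.1 t‖ ^ 2) μ)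
    (t : unitInterval) : Integrable (fun p : OmegaBar d => p.2.1 t) μ :=
  integrable_of_sq (measurable_evalBar t).aestronglyMeasurable (h t)

instance : IsFiniteMeasure lebI := by
  constructor
  rw [lebI, MeasurableEmbedding.comap_apply (MeasurableEmbedding.subtype_coe measurableSet_Icc),
    Set.image_univ, Subtype.range_coe]
  show volume (Set.Icc (0:ℝ) 1) < ⊤
  rw [Real.volume_Icc]
  exact ENNReal.ofReal_lt_top

lemma prod_E₂_eq {E₂ : Set (unitInterval × PathSpace d)} (hE₂ : MeasurableSet E₂)
    (μ : Measure (OmegaBar d)) [SFinite μ] :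
    (lebI.prod μ) {q : unitInterval × OmegaBar d | (q.1, q.2.2) ∈ E₂}
      = (lebI.prod (μ.map Prod.snd)) E₂ := by
  have hmap : Measurable (Prod.map (id : unitInterval → unitInterval)
      (Prod.snd : OmegaBar d → PathSpace d)) := measurable_id.prodMap measurable_snd
  have hset : {q : unitInterval × OmegaBar d | (q.1, q.2.2) ∈ E₂}
      = Prod.map id Prod.snd ⁻¹' E₂ := rfl
  calc (lebI.prod μ) {q : unitInterval × OmegaBar d | (q.1, q.2.2) ∈ E₂}
      = ((lebI.prod μ).map (Prod.map id Prod.snd)) E₂ := by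
        rw [hset, Measure.map_apply hmap hE₂]
    _ = ((lebI.map id).prod (μ.map Prod.snd)) E₂ := by
        rw [Measure.map_prod_map _ _ measurable_id measurable_snd]
    _ = (lebI.prod (μ.map Prod.snd)) E₂ := by rw [Measure.map_id]

lemma map_snd_mem_QE {E₁ : Set (PathSpace d)} (hE₁ : MeasurableSet[pathF d 1] E₁)
    {E₂ : Set (unitInterval × PathSpace d)} (hE₂ : MeasurableSet E₂)
    {μ : Measure (OmegaBar d)} (hμ : μ ∈ QEBar d E₁ E₂) :
    μ.map Prod.snd ∈ QE d E₁ E₂ := by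
  obtain ⟨⟨hprob, hsqB, hmartB⟩, h1, h2⟩ := hμ
  haveI : IsProbabilityMeasure μ := hprob
  haveI : IsProbabilityMeasure (μ.map Prod.snd) :=
    Measure.isProbabilityMeasure_map measurable_snd.aemeasurable
  have hE₁' : MeasurableSet E₁ := hE₁
  have hsq : ∀ t : unitInterval,
      Integrable (fun ω : PathSpace d => ‖ω.1 t‖ ^ 2) (μ.map Prod.snd) := by
    intro t
    rw [integrable_map_measure
      ((evalMeas (d := d) unitInterval.le_one').norm.pow_const 2).aestronglyMeasurable
      measurable_snd.aemeasurable]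
    exact hsqB t
  refine ⟨⟨inferInstance, hsq, fun s t hst => ?_⟩, ?_, ?_⟩
  · haveI : SigmaFinite ((μ.map Prod.snd).trim (pathF_le s)) := by
      have : IsFiniteMeasure ((μ.map Prod.snd).trim (pathF_le s)) := isFiniteMeasure_trim _
      infer_instance
    haveI : SigmaFinite (μ.trim (barF_le (d := d) s)) := by
      have : IsFiniteMeasure (μ.trim (barF_le (d := d) s)) := isFiniteMeasure_trim _
      infer_instance
    refine ae_eq_condExp_of_forall_setIntegral_eq (pathF_le s)
      (integrable_evalP hsq t) (fun A _ _ => (integrable_evalP hsq s).integrableOn)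
      (fun A hA _ => ?_)
      ⟨_, ((evalMeas (le_refl s)).stronglyMeasurable :
        StronglyMeasurable[pathF d s] (fun ω : PathSpace d => ω.1 s)), EventuallyEq.rfl⟩
    have hAm : MeasurableSet A := (pathF_le s) A hA
    have hsnd : MeasurableSet[barF d s] (Prod.snd ⁻¹' A) :=
      comap_snd_le_barF s _ ⟨A, hA, rfl⟩
    rw [setIntegral_map hAm ((evalMeas (d := d) unitInterval.le_one').aestronglyMeasurable)
        measurable_snd.aemeasurable,
      setIntegral_map hAm ((evalMeas (d := d) unitInterval.le_one').aestronglyMeasurable)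
        measurable_snd.aemeasurable]
    calc ∫ p in Prod.snd ⁻¹' A, p.2.1 s ∂μ
        = ∫ p in Prod.snd ⁻¹' A, (μ[fun p : OmegaBar d => p.2.1 t | barF d s]) p ∂μ :=
          setIntegral_congr_ae (barF_le s _ hsnd) ((hmartB s t hst).mono fun p hp _ => hp)
      _ = ∫ p in Prod.snd ⁻¹' A, p.2.1 t ∂μ :=
          setIntegral_condExp (barF_le s) (integrable_evalBar hsqB t) hsnd
  · rw [Measure.map_apply measurable_snd hE₁', show Prod.snd ⁻¹' E₁
      = (Set.univ : Set unitInterval) ×ˢ E₁ from Set.univ_prod.symm]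
    exact h1
  · rw [← prod_E₂_eq hE₂ μ]
    exact h2

lemma dirac_prod_mem_QEBar {E₁ : Set (PathSpace d)}
    {E₂ : Set (unitInterval × PathSpace d)} (hE₂ : MeasurableSet E₂)
    {P : Measure (PathSpace d)} (hP : P ∈ QE d E₁ E₂) :
    (Measure.dirac (1 : unitInterval)).prod P ∈ QEBar d E₁ E₂ := by
  obtain ⟨⟨hprob, hsqP, hmartP⟩, h1, h2⟩ := hP
  haveI : IsProbabilityMeasure P := hprob
  have hmap : (Measure.dirac (1 : unitInterval)).prod P
      = P.map (Prod.mk (1 : unitInterval)) := Measure.dirac_prod _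
  haveI : IsProbabilityMeasure ((Measure.dirac (1 : unitInterval)).prod P) := by
    rw [hmap]; exact Measure.isProbabilityMeasure_map measurable_prodMk_left.aemeasurable
  have hsq : ∀ t : unitInterval, Integrable (fun p : OmegaBar d => ‖p.2.1 t‖ ^ 2)
      ((Measure.dirac (1 : unitInterval)).prod P) := by
    intro t
    rw [hmap, integrable_map_measure
      ((measurable_evalBar t).norm.pow_const 2).aestronglyMeasurable
      measurable_prodMk_left.aemeasurable]
    exact hsqP t
  refine ⟨⟨inferInstance, hsq, fun s t hst => ?_⟩, ?_, ?_⟩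
  · haveI : SigmaFinite (((Measure.dirac (1 : unitInterval)).prod P).trim
        (barF_le (d := d) s)) := by
      have : IsFiniteMeasure (((Measure.dirac (1 : unitInterval)).prod P).trim
        (barF_le (d := d) s)) := isFiniteMeasure_trim _
      infer_instance
    haveI : SigmaFinite (P.trim (pathF_le s)) := by
      have : IsFiniteMeasure (P.trim (pathF_le s)) := isFiniteMeasure_trim _
      infer_instance
    refine ae_eq_condExp_of_forall_setIntegral_eq (barF_le s)
      (integrable_evalBar hsq t) (fun A _ _ => (integrable_evalBar hsq s).integrableOn)
      (fun A hA _ => ?_)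
      ⟨_, Measurable.stronglyMeasurable
        ((evalMeas (le_refl s)).comp
          (Measurable.of_comap_le (comap_snd_le_barF s) :
            @Measurable (OmegaBar d) (PathSpace d) (barF d s) (pathF d s) Prod.snd)),
        EventuallyEq.rfl⟩
    have hAm : MeasurableSet A := barF_le s A hA
    have hsec : MeasurableSet[pathF d s] (Prod.mk (1 : unitInterval) ⁻¹' A) :=
      measurable_mk_one s hA
    rw [hmap, setIntegral_map hAm (measurable_evalBar s).aestronglyMeasurable
        measurable_prodMk_left.aemeasurable,
      setIntegral_map hAm (measurable_evalBar t).aestronglyMeasurable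
        measurable_prodMk_left.aemeasurable]
    show ∫ ω in Prod.mk (1 : unitInterval) ⁻¹' A, ω.1 s ∂P
        = ∫ ω in Prod.mk (1 : unitInterval) ⁻¹' A, ω.1 t ∂P
    calc ∫ ω in Prod.mk (1 : unitInterval) ⁻¹' A, ω.1 s ∂P
        = ∫ ω in Prod.mk (1 : unitInterval) ⁻¹' A,
            (P[fun ω : PathSpace d => ω.1 t | pathF d s]) ω ∂P :=
          setIntegral_congr_ae (pathF_le s _ hsec) ((hmartP s t hst).mono fun ω hω _ => hω)
      _ = ∫ ω in Prod.mk (1 : unitInterval) ⁻¹' A, ω.1 t ∂P :=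
          setIntegral_condExp (pathF_le s) (integrable_evalP hsqP t) hsec
  · rw [Measure.prod_prod, measure_univ, one_mul]
    exact h1
  · rw [prod_E₂_eq hE₂, show ((Measure.dirac (1 : unitInterval)).prod P).map Prod.snd = P by
      rw [Measure.map_snd_prod, measure_univ, one_smul]]
    exact h2

end QEAux

/-- `𝒬^E` is empty if and only if `𝒬̄^E` is empty. -/
theorem QE_empty_iff_QEBar_empty (d : ℕ) (hd : 1 ≤ d)
    (E₁ : Set (PathSpace d)) (hE₁ : MeasurableSet[pathF d 1] E₁)
    (E₂ : Set (unitInterval × PathSpace d)) (hE₂ : MeasurableSet E₂)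
    (hE₂na : NonAnticipativeSet E₂) :
    QE d E₁ E₂ = ∅ ↔ QEBar d E₁ E₂ = ∅ := by
  constructor
  · intro h
    rw [Set.eq_empty_iff_forall_notMem] at h ⊢
    intro μ hμ
    exact h _ (QEAux.map_snd_mem_QE hE₁ hE₂ hμ)
  · intro h
    rw [Set.eq_empty_iff_forall_notMem] at h ⊢
    intro P hP
    exact h _ (QEAux.dirac_prod_mem_QEBar hE₂ hP)

end
end

section
/- Let E_1 ∈ ℱ_1, let E_2 ⊆ [0,1]×Ω be measurable and non-anticipative, let ε ∈ (0,1) and let μ ∈ 𝒬̄^E. Then μ^ε := (1−ε)·μ + ε·(δ_1 ⊗ μ^Ω) belongs to 𝒬̄^E, has the same Ω-marginal as μ, and is ε-modified. -/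
open MeasureTheory Set Filter Topology
open scoped ENNReal

noncomputable section

section EpsAuxLemmas

variable {d : ℕ}

lemma meas_eval_le (u t : unitInterval) (hu : u ≤ t) :
    MeasurableSpace.comap (fun ω : PathSpace d => ω.1 u) inferInstance ≤ pathF d t :=
  le_iSup₂ (f := fun s (_ : s ≤ t) =>
    MeasurableSpace.comap (fun ω : PathSpace d => ω.1 s) inferInstance) u hu

lemma pathF_le (t : unitInterval) : pathF d t ≤ pathF d 1 :=
  iSup₂_le fun u _ => meas_eval_le u 1 unitInterval.le_one'

lemma meas_eval (u : unitInterval) : Measurable (fun ω : PathSpace d => ω.1 u) :=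
  Measurable.of_comap_le (meas_eval_le u 1 unitInterval.le_one')

lemma barF_le (s : unitInterval) :
    barF d s ≤ (inferInstance : MeasurableSpace (OmegaBar d)) := by
  refine sup_le ?_ (iSup₂_le fun u _ => ?_)
  · exact (measurable_fst.min measurable_const).comap_le
  · exact ((meas_eval u).comp measurable_snd).comap_le

lemma meas_snd_comap (s : unitInterval) :
    MeasurableSpace.comap (Prod.snd : OmegaBar d → PathSpace d) (pathF d s) ≤ barF d s := by
  rw [pathF]
  simp_rw [MeasurableSpace.comap_iSup, MeasurableSpace.comap_comp]
  exact iSup₂_le fun u hu => le_sup_of_le_right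
    (le_iSup₂ (f := fun v (_ : v ≤ s) =>
      MeasurableSpace.comap (fun p : OmegaBar d => p.2.1 v) inferInstance) u hu)

lemma comap_iota_le (s : unitInterval) :
    MeasurableSpace.comap (Prod.mk (1 : unitInterval) : PathSpace d → OmegaBar d) (barF d s)
      ≤ pathF d s := by
  rw [barF, MeasurableSpace.comap_sup, MeasurableSpace.comap_comp]
  refine sup_le ?_ ?_
  · have hc : @Measurable (PathSpace d) unitInterval (pathF d s) _
        ((fun p : OmegaBar d => min p.1 s) ∘ Prod.mk 1) := by
      have : ((fun p : OmegaBar d => min p.1 s) ∘ Prod.mk 1) = fun _ => min 1 s := rfl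
      rw [this]; exact measurable_const
    exact hc.comap_le
  · simp_rw [MeasurableSpace.comap_iSup, MeasurableSpace.comap_comp]
    exact iSup₂_le fun u hu => le_iSup₂ (f := fun v (_ : v ≤ s) =>
      MeasurableSpace.comap (fun ω : PathSpace d => ω.1 v) inferInstance) u hu

lemma lebI_finite : IsFiniteMeasure lebI := by
  constructor
  rw [lebI, MeasurableEmbedding.comap_apply (MeasurableEmbedding.subtype_coe measurableSet_Icc)]
  have h : (Subtype.val '' (univ : Set unitInterval)) = Set.Icc (0:ℝ) 1 :=
    Subtype.coe_image_univ _
  rw [h, Real.volume_Icc]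
  exact ENNReal.ofReal_lt_top

lemma prod_smul_right' {α β : Type*} [MeasurableSpace α] [MeasurableSpace β]
    (μ : Measure α) (ν : Measure β) [SigmaFinite μ] [IsFiniteMeasure ν]
    (c : ℝ≥0∞) (hc : c ≠ ⊤) : μ.prod (c • ν) = c • μ.prod ν := by
  haveI : IsFiniteMeasure (c • ν) := ⟨by
    rw [Measure.smul_apply, smul_eq_mul]
    exact ENNReal.mul_lt_top hc.lt_top (measure_lt_top ν univ)⟩
  refine Measure.prod_eq fun s t hs ht => ?_
  rw [Measure.smul_apply, Measure.prod_prod, Measure.smul_apply, smul_eq_mul, smul_eq_mul]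
  ring

end EpsAuxLemmas

/-- the `ε`-modification `μ^ε := (1−ε)·μ + ε·(δ₁ ⊗ μ^Ω)` of `μ ∈ 𝒬̄^E`
belongs to `𝒬̄^E`, has the same `Ω`-marginal as `μ`, and is `ε`-modified. -/
theorem epsModification_mem_QEBar (d : ℕ) (hd : 1 ≤ d)
    (E₁ : Set (PathSpace d)) (hE₁ : MeasurableSet[pathF d 1] E₁)
    (E₂ : Set (unitInterval × PathSpace d)) (hE₂ : MeasurableSet E₂)
    (hE₂na : NonAnticipativeSet E₂)
    (ε : ℝ) (hε : ε ∈ Set.Ioo (0 : ℝ) 1)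
    (μ : Measure (OmegaBar d)) (hμ : μ ∈ QEBar d E₁ E₂) :
    (ENNReal.ofReal (1 - ε) • μ +
        ENNReal.ofReal ε • ((Measure.dirac (1 : unitInterval)).prod (μ.map Prod.snd)))
      ∈ QEBar d E₁ E₂ ∧
    (ENNReal.ofReal (1 - ε) • μ +
        ENNReal.ofReal ε • ((Measure.dirac (1 : unitInterval)).prod (μ.map Prod.snd))).map Prod.snd
      = μ.map Prod.snd ∧
    EpsModified ε (ENNReal.ofReal (1 - ε) • μ +
        ENNReal.ofReal ε • ((Measure.dirac (1 : unitInterval)).prod (μ.map Prod.snd))) := by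
  obtain ⟨⟨hprob, hsq, hmart⟩, hE1μ, hE2μ⟩ := hμ
  haveI : IsProbabilityMeasure μ := hprob
  haveI hlebI : IsFiniteMeasure lebI := lebI_finite
  set ν : Measure (PathSpace d) := μ.map Prod.snd with hν
  haveI hνprob : IsProbabilityMeasure ν := Measure.isProbabilityMeasure_map measurable_snd.aemeasurable
  set μ₂ : Measure (OmegaBar d) := (Measure.dirac (1 : unitInterval)).prod ν with hμ₂def
  haveI hμ₂prob : IsProbabilityMeasure μ₂ := by rw [hμ₂def]; infer_instance
  have hdp : μ₂ = ν.map (Prod.mk (1 : unitInterval)) := Measure.dirac_prod _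
  set a := ENNReal.ofReal (1 - ε) with ha
  set b := ENNReal.ofReal ε with hb
  have hab : a + b = 1 := by
    rw [ha, hb, ← ENNReal.ofReal_add (by linarith [hε.2]) hε.1.le]
    norm_num
  have haT : a ≠ ⊤ := ENNReal.ofReal_ne_top
  have hbT : b ≠ ⊤ := ENNReal.ofReal_ne_top
  haveI hafin : IsFiniteMeasure (a • μ) := ⟨by
    rw [Measure.smul_apply, smul_eq_mul]
    exact ENNReal.mul_lt_top haT.lt_top (measure_lt_top μ univ)⟩
  haveI hbfin : IsFiniteMeasure (b • μ₂) := ⟨by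
    rw [Measure.smul_apply, smul_eq_mul]
    exact ENNReal.mul_lt_top hbT.lt_top (measure_lt_top μ₂ univ)⟩
  have hμ'prob : IsProbabilityMeasure (a • μ + b • μ₂) := by
    constructor
    simp only [Measure.add_apply, Measure.smul_apply, smul_eq_mul, measure_univ, mul_one]
    exact hab
  haveI := hμ'prob
  -- measurability
  have hXm : ∀ u : unitInterval, Measurable (fun p : OmegaBar d => p.2.1 u) :=
    fun u => (meas_eval u).comp measurable_snd
  have hsqm : ∀ u : unitInterval, Measurable (fun p : OmegaBar d => ‖p.2.1 u‖ ^ 2) :=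
    fun u => ((hXm u).norm.pow_const 2)
  -- integrability
  have hXμ : ∀ u : unitInterval, Integrable (fun p : OmegaBar d => p.2.1 u) μ := by
    intro u
    refine Integrable.mono' ((hsq u).add (integrable_const 1)) ((hXm u).aestronglyMeasurable) ?_
    filter_upwards with p
    have h1 := sq_nonneg (‖p.2.1 u‖ - 1)
    have h2 := norm_nonneg (p.2.1 u)
    simp only [Pi.add_apply]
    nlinarith
  have hXν : ∀ u, Integrable (fun ω : PathSpace d => ω.1 u) ν := fun u =>
    (integrable_map_measure ((meas_eval u).aestronglyMeasurable)
      measurable_snd.aemeasurable).mpr (hXμ u)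
  have hsqν : ∀ u, Integrable (fun ω : PathSpace d => ‖ω.1 u‖ ^ 2) ν := fun u =>
    (integrable_map_measure (((meas_eval u).norm.pow_const 2).aestronglyMeasurable)
      measurable_snd.aemeasurable).mpr (hsq u)
  have hXμ₂ : ∀ u, Integrable (fun p : OmegaBar d => p.2.1 u) μ₂ := by
    intro u; rw [hdp]
    exact (integrable_map_measure ((hXm u).aestronglyMeasurable)
      measurable_prodMk_left.aemeasurable).mpr (hXν u)
  have hsqμ₂ : ∀ u, Integrable (fun p : OmegaBar d => ‖p.2.1 u‖ ^ 2) μ₂ := by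
    intro u; rw [hdp]
    exact (integrable_map_measure ((hsqm u).aestronglyMeasurable)
      measurable_prodMk_left.aemeasurable).mpr (hsqν u)
  have hXμ' : ∀ u, Integrable (fun p : OmegaBar d => p.2.1 u) (a • μ + b • μ₂) := fun u =>
    ((hXμ u).smul_measure haT).add_measure ((hXμ₂ u).smul_measure hbT)
  have hsqμ' : ∀ u, Integrable (fun p : OmegaBar d => ‖p.2.1 u‖ ^ 2) (a • μ + b • μ₂) := fun u =>
    ((hsq u).smul_measure haT).add_measure ((hsqμ₂ u).smul_measure hbT)
  -- marginal
  have hsndι : (Prod.snd ∘ Prod.mk (1 : unitInterval) : PathSpace d → PathSpace d) = id := rfl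
  have hmarg : (a • μ + b • μ₂).map Prod.snd = ν := by
    rw [Measure.map_add _ _ measurable_snd, Measure.map_smul, Measure.map_smul, hdp,
      Measure.map_map measurable_snd measurable_prodMk_left, hsndι, Measure.map_id,
      ← hν, ← add_smul, hab, one_smul]
  -- set integral conversions
  have setν : ∀ (u : unitInterval) (B : Set (PathSpace d)), MeasurableSet B →
      ∫ ω in B, ω.1 u ∂ν = ∫ p in Prod.snd ⁻¹' B, p.2.1 u ∂μ := fun u B hB =>
    setIntegral_map hB ((meas_eval u).aestronglyMeasurable) measurable_snd.aemeasurable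
  have setμ₂ : ∀ (u : unitInterval) (A : Set (OmegaBar d)), MeasurableSet A →
      ∫ p in A, p.2.1 u ∂μ₂ = ∫ ω in (Prod.mk (1:unitInterval)) ⁻¹' A, ω.1 u ∂ν := by
    intro u A hA
    rw [hdp]
    exact setIntegral_map hA ((hXm u).aestronglyMeasurable) measurable_prodMk_left.aemeasurable
  -- the martingale property for the modified measure
  have hmartμ' : ∀ s t : unitInterval, s ≤ t →
      (fun p : OmegaBar d => p.2.1 s) =ᵐ[a • μ + b • μ₂]
        ((a • μ + b • μ₂)[fun p : OmegaBar d => p.2.1 t | barF d s]) := by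
    intro s t hst
    haveI : SigmaFinite (μ.trim (barF_le s)) := inferInstance
    haveI : SigmaFinite ((a • μ + b • μ₂).trim (barF_le s)) := inferInstance
    have martμ : ∀ A : Set (OmegaBar d), MeasurableSet[barF d s] A →
        ∫ p in A, p.2.1 t ∂μ = ∫ p in A, p.2.1 s ∂μ := by
      intro A hA
      calc ∫ p in A, p.2.1 t ∂μ
          = ∫ p in A, (μ[fun p : OmegaBar d => p.2.1 t | barF d s]) p ∂μ :=
            (setIntegral_condExp (barF_le s) (hXμ t) hA).symm
        _ = ∫ p in A, p.2.1 s ∂μ :=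
            integral_congr_ae (ae_restrict_of_ae (hmart s t hst).symm)
    have martν : ∀ B : Set (PathSpace d), MeasurableSet[pathF d s] B →
        ∫ ω in B, ω.1 t ∂ν = ∫ ω in B, ω.1 s ∂ν := by
      intro B hB
      have hBa : MeasurableSet B := pathF_le s B hB
      rw [setν t B hBa, setν s B hBa]
      exact martμ _ (meas_snd_comap s _ ⟨B, hB, rfl⟩)
    have martμ₂ : ∀ A : Set (OmegaBar d), MeasurableSet[barF d s] A →
        ∫ p in A, p.2.1 t ∂μ₂ = ∫ p in A, p.2.1 s ∂μ₂ := by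
      intro A hA
      have hAa : MeasurableSet A := barF_le s A hA
      rw [setμ₂ t A hAa, setμ₂ s A hAa]
      exact martν _ (comap_iota_le s _ ⟨A, hA, rfl⟩)
    have split : ∀ (u : unitInterval) (A : Set (OmegaBar d)),
        ∫ p in A, p.2.1 u ∂(a • μ + b • μ₂)
          = a.toReal • ∫ p in A, p.2.1 u ∂μ + b.toReal • ∫ p in A, p.2.1 u ∂μ₂ := by
      intro u A
      rw [Measure.restrict_add, Measure.restrict_smul, Measure.restrict_smul,
        integral_add_measure (((hXμ u).integrableOn).smul_measure haT)
          (((hXμ₂ u).integrableOn).smul_measure hbT),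
        integral_smul_measure, integral_smul_measure]
    have hXsm : StronglyMeasurable[barF d s] (fun p : OmegaBar d => p.2.1 s) := by
      refine Measurable.stronglyMeasurable ?_
      exact Measurable.of_comap_le (le_sup_of_le_right (le_iSup₂ (f := fun v (_ : v ≤ s) =>
        MeasurableSpace.comap (fun p : OmegaBar d => p.2.1 v) inferInstance) s le_rfl))
    refine ae_eq_condExp_of_forall_setIntegral_eq (barF_le s) (hXμ' t)
      (fun A _ _ => (hXμ' s).integrableOn) (fun A hA _ => ?_)
      hXsm.aestronglyMeasurable
    rw [split s A, split t A, martμ A hA, martμ₂ A hA]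
  -- E₁ condition
  have hsndE₁ : (Prod.snd : OmegaBar d → PathSpace d) ⁻¹' E₁ = univ ×ˢ E₁ := by
    ext p; simp [Set.mem_prod]
  have hνE₁ : ν E₁ = 1 := by
    rw [hν, Measure.map_apply measurable_snd hE₁, hsndE₁]; exact hE1μ
  have hμ₂E₁ : μ₂ (univ ×ˢ E₁) = 1 := by
    rw [hμ₂def, Measure.prod_prod, measure_univ, one_mul, hνE₁]
  have hE₁' : (a • μ + b • μ₂) (univ ×ˢ E₁) = 1 := by
    simp only [Measure.add_apply, Measure.smul_apply, smul_eq_mul, hE1μ, hμ₂E₁, mul_one]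
    exact hab
  -- E₂ condition
  have hS : MeasurableSet {q : unitInterval × OmegaBar d | (q.1, q.2.2) ∈ E₂} :=
    (measurable_fst.prodMk measurable_snd.snd) hE₂
  have hmap1 : lebI.prod ν = (lebI.prod μ).map (Prod.map id Prod.snd) := by
    have h := Measure.map_prod_map (f := (id : unitInterval → unitInterval))
      (g := (Prod.snd : OmegaBar d → PathSpace d)) lebI μ measurable_id measurable_snd
    rwa [Measure.map_id] at h
  have hνE₂ : (lebI.prod ν) E₂ = 1 := by
    rw [hmap1, Measure.map_apply (measurable_id.prodMap measurable_snd) hE₂]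
    exact hE2μ
  have hμ₂E₂ : (lebI.prod μ₂) {q : unitInterval × OmegaBar d | (q.1, q.2.2) ∈ E₂} = 1 := by
    have hmap2 : lebI.prod μ₂ = (lebI.prod ν).map (Prod.map id (Prod.mk (1:unitInterval))) := by
      have h := Measure.map_prod_map (f := (id : unitInterval → unitInterval))
        (g := (Prod.mk (1:unitInterval) : PathSpace d → OmegaBar d)) lebI ν
        measurable_id measurable_prodMk_left
      rw [Measure.map_id] at h
      rw [hdp]; exact h
    rw [hmap2, Measure.map_apply (measurable_id.prodMap measurable_prodMk_left) hS]
    exact hνE₂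
  have hE₂' : (lebI.prod (a • μ + b • μ₂))
      {q : unitInterval × OmegaBar d | (q.1, q.2.2) ∈ E₂} = 1 := by
    rw [Measure.prod_add, prod_smul_right' lebI μ a haT, prod_smul_right' lebI μ₂ b hbT]
    simp only [Measure.add_apply, Measure.smul_apply, smul_eq_mul, hE2μ, hμ₂E₂, mul_one]
    exact hab
  -- ε-modified
  have heps : EpsModified ε (a • μ + b • μ₂) := by
    intro Γ hΓ
    rw [hmarg]
    have hμ₂Γ : μ₂ ({(1 : unitInterval)} ×ˢ Γ) = ν Γ := by
      rw [hμ₂def, Measure.prod_prod, Measure.dirac_apply' _ (measurableSet_singleton _)]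
      simp
    calc ENNReal.ofReal ε * ν Γ = b * μ₂ ({(1:unitInterval)} ×ˢ Γ) := by rw [hμ₂Γ, hb]
      _ ≤ a * μ ({(1:unitInterval)} ×ˢ Γ) + b * μ₂ ({(1:unitInterval)} ×ˢ Γ) :=
          self_le_add_left _ _
      _ = (a • μ + b • μ₂) ({(1:unitInterval)} ×ˢ Γ) := by
          simp [Measure.add_apply, Measure.smul_apply, smul_eq_mul]
  exact ⟨⟨⟨hμ'prob, hsqμ', hmartμ'⟩, hE₁', hE₂'⟩, hmarg, heps⟩


end
end

section
/- Let C : ℝ → ℝ be measurable and integrable on [0,1), and suppose that for every a ∈ [0,1), ∫_0^a C(r) dr = (a − 1)·C(a). Then C(a) = 0 for every a ∈ [0,1). -/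
open MeasureTheory Set

/-- if `C : ℝ → ℝ` is measurable and integrable on `[0,1)` and
`∫₀ᵃ C(r) dr = (a−1)·C(a)` for every `a ∈ [0,1)`, then `C ≡ 0` on `[0,1)`. -/
theorem eq_zero_of_integral_eq (C : ℝ → ℝ) (hmeas : Measurable C)
    (hint : IntegrableOn C (Set.Ico (0 : ℝ) 1) volume)
    (h : ∀ a ∈ Set.Ico (0 : ℝ) 1, ∫ r in Set.Icc (0 : ℝ) a, C r = (a - 1) * C a) :
    ∀ a ∈ Set.Ico (0 : ℝ) 1, C a = 0 := by
  intro a₀ ha₀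
  obtain ⟨ha₀0, ha₀1⟩ := ha₀
  set b : ℝ := (a₀ + 1) / 2 with hb_def
  have ha₀b : a₀ < b := by rw [hb_def]; linarith
  have hb1 : b < 1 := by rw [hb_def]; linarith
  have hb0 : 0 ≤ b := by rw [hb_def]; linarith
  set F : ℝ → ℝ := fun a => ∫ x in (0:ℝ)..a, C x with hF_def
  -- F x = (x - 1) * C x on [0,1)
  have hFx : ∀ x ∈ Ico (0:ℝ) 1, F x = (x - 1) * C x := by
    intro x hx
    have h1 := h x hx
    rw [integral_Icc_eq_integral_Ioc] at h1
    have h2 : F x = ∫ t in Ioc (0:ℝ) x, C t := intervalIntegral.integral_of_le hx.1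
    rw [h2, h1]
  -- continuity of F
  have hFcont : ContinuousOn F (Icc 0 b) := by
    have hI : IntegrableOn C (Icc 0 b) volume :=
      hint.mono_set (fun y hy => ⟨hy.1, lt_of_le_of_lt hy.2 hb1⟩)
    have := intervalIntegral.continuousOn_primitive (f := C) (a := 0) (b := b) (μ := volume) hI
    exact this.congr fun x hx => intervalIntegral.integral_of_le hx.1
  -- interval integrability up to any x < 1
  have hII : ∀ x ∈ Icc (0:ℝ) b, IntervalIntegrable C volume 0 x := by
    intro x hx
    have hI : IntegrableOn C (Icc 0 x) volume :=
      hint.mono_set (fun y hy => ⟨hy.1, lt_of_le_of_lt (hy.2.trans hx.2) hb1⟩)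
    exact (intervalIntegrable_iff_integrableOn_Icc_of_le hx.1).2 hI
  -- right derivative of F
  have hderivF : ∀ x ∈ Ico (0:ℝ) b, HasDerivWithinAt F (C x) (Ici x) x := by
    intro x hx
    have hxb : x < b := hx.2
    -- F continuous within Ici x at x
    have hFw : ContinuousWithinAt F (Ici x) x := by
      have h1 : ContinuousWithinAt F (Icc 0 b) x := hFcont x ⟨hx.1, hxb.le⟩
      apply h1.mono_of_mem_nhdsWithin
      have h2 : Ici x ∩ Iio b ∈ nhdsWithin x (Ici x) :=
        inter_mem_nhdsWithin _ (Iio_mem_nhds hxb)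
      exact Filter.mem_of_superset h2
        (fun y hy => ⟨hx.1.trans hy.1, hy.2.le⟩)
    -- C continuous within Ici x at x
    have hCw : ContinuousWithinAt C (Ici x) x := by
      have hx1 : x - 1 ≠ 0 := by
        have : x < 1 := hxb.trans hb1
        intro hc; apply this.ne; linarith [sub_eq_zero.mp hc]
      have hg : ContinuousWithinAt (fun y => F y / (y - 1)) (Ici x) x :=
        hFw.div ((continuous_id.sub continuous_const).continuousWithinAt) hx1
      apply hg.congr_of_eventuallyEq ?_ ?_
      · have h2 : Ici x ∩ Iio 1 ∈ nhdsWithin x (Ici x) :=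
          inter_mem_nhdsWithin _ (Iio_mem_nhds (hxb.trans hb1))
        filter_upwards [h2] with y hy
        have hy2 : y < 1 := hy.2
        have hy1 : y - 1 ≠ 0 := by intro hc; exact hy2.ne (by linarith [sub_eq_zero.mp hc])
        rw [hFx y ⟨hx.1.trans hy.1, hy.2⟩]
        field_simp
      · rw [hFx x ⟨hx.1, hxb.trans hb1⟩]
        field_simp
    exact intervalIntegral.integral_hasDerivWithinAt_right (s := Ici x) (t := Ioi x)
      (hII x ⟨hx.1, hxb.le⟩)
      ⟨univ, Filter.univ_mem, hmeas.aestronglyMeasurable.restrict⟩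
      (hCw.mono Ioi_subset_Ici_self)
  -- G = F / (· - 1) is constant on [0, a₀]
  set G : ℝ → ℝ := fun y => F y / (y - 1) with hG_def
  have hGcont : ContinuousOn G (Icc 0 a₀) := by
    apply ContinuousOn.div
    · exact hFcont.mono (fun y hy => ⟨hy.1, hy.2.trans ha₀b.le⟩)
    · exact (continuous_id.sub continuous_const).continuousOn
    · intro y hy
      have : y < 1 := lt_of_le_of_lt hy.2 ha₀1
      intro hc; exact this.ne (by linarith [sub_eq_zero.mp hc])
  have hGderiv : ∀ x ∈ Ico (0:ℝ) a₀, HasDerivWithinAt G 0 (Ici x) x := by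
    intro x hx
    have hx1 : x < 1 := hx.2.trans ha₀1
    have hx1' : x - 1 ≠ 0 := by intro hc; exact hx1.ne (by linarith [sub_eq_zero.mp hc])
    have h1 := hderivF x ⟨hx.1, hx.2.trans ha₀b⟩
    have h2 : HasDerivWithinAt (fun y : ℝ => y - 1) 1 (Ici x) x :=
      (hasDerivWithinAt_id x (Ici x)).sub_const 1
    have h3 := h1.div h2 hx1'
    have h4 : (0:ℝ) = (C x * (x - 1) - F x * 1) / (x - 1) ^ 2 := by
      rw [hFx x ⟨hx.1, hx1⟩]
      ring
    rw [h4]; exact h3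
  have hconst := constant_of_has_deriv_right_zero hGcont hGderiv a₀ ⟨ha₀0, le_refl _⟩
  have hG0 : G 0 = 0 := by
    simp [hG_def, hF_def, intervalIntegral.integral_same]
  rw [hG0] at hconst
  -- conclude
  have hF0 : F a₀ = 0 := by
    have hx1' : a₀ - 1 ≠ 0 := by intro hc; exact ha₀1.ne (by linarith [sub_eq_zero.mp hc])
    have : F a₀ / (a₀ - 1) = 0 := hconst
    field_simp at this
    simpa using this
  have := hFx a₀ ⟨ha₀0, ha₀1⟩
  rw [hF0] at this
  have hx1' : a₀ - 1 ≠ 0 := by intro hc; exact ha₀1.ne (by linarith [sub_eq_zero.mp hc])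
  exact (mul_eq_zero.mp this.symm).resolve_left hx1'
end
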